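/- arXiv:1810.08057 — 3 statements merged into one kernel-verified Lean document; each statement's English description precedes it below -/
import Mathlib

section
/- Let S ⊆ ℝ² be a compact set with path-connected boundary, S = closure(interior(S)). If S is θ₀-biconvex but not θ-biconvex for some θ ≠ θ₀ in [0, π/2), then the Lebesgue measure of 𝔹_θ(S) \ S is strictly positive. -/
noncomputable section

open Set Metric MeasureTheory Filter Real
open scoped RealInnerProductSpace Topology symmDiff

/-- The Euclidean plane. -/
abbrev E2 : Type := EuclideanSpace ℝ (Fin 2)

/-- The line through `p` in direction `v`. -/
def lineThru (p v : E2) : Set E2 := {x | ∃ t : ℝ, x = p + t • v}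

/-- `S` is biconvex with respect to the directions `b₁, b₂`: every section of `S`
along a line in direction `b₁` or `b₂` is convex. -/
def Biconvex (b₁ b₂ : E2) (S : Set E2) : Prop :=
  ∀ p : E2, Convex ℝ (lineThru p b₁ ∩ S) ∧ Convex ℝ (lineThru p b₂ ∩ S)

/-- Open quadrant-cone with vertex `y` and sides in the directions `u, v`
(an open cone of opening angle `π/2` when `u ⊥ v`). -/
def Quadrant (y u v : E2) : Set E2 :=
  {x | ∃ s t : ℝ, 0 < s ∧ 0 < t ∧ x = y + s • u + t • v}

/-- The four open quadrant-cones at `y` with sides parallel to `b₁, b₂`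
(axes `ξ, Rξ, R²ξ, R³ξ` with `ξ = (b₁+b₂)/‖b₁+b₂‖`). -/
def QuadrantCones (b₁ b₂ y : E2) : Set (Set E2) :=
  {Quadrant y b₁ b₂, Quadrant y (-b₁) b₂, Quadrant y b₁ (-b₂), Quadrant y (-b₁) (-b₂)}

/-- First canonical axis rotated counter-clockwise by `θ`. -/
def bvec1 (θ : ℝ) : E2 := (WithLp.equiv 2 (Fin 2 → ℝ)).symm ![Real.cos θ, Real.sin θ]

/-- Second canonical axis rotated counter-clockwise by `θ`. -/
def bvec2 (θ : ℝ) : E2 := (WithLp.equiv 2 (Fin 2 → ℝ)).symm ![-Real.sin θ, Real.cos θ]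

/-- `S` is `θ`-biconvex. -/
def ThetaBiconvex (θ : ℝ) (S : Set E2) : Prop := Biconvex (bvec1 θ) (bvec2 θ) S

/-- The `θ`-biconvex hull: intersection of the complements of all open quadrant-cones
(with sides parallel to the `θ`-rotated axes) that do not meet `A`. -/
def BHull (θ : ℝ) (A : Set E2) : Set E2 :=
  ⋂₀ {T | ∃ y C, C ∈ QuadrantCones (bvec1 θ) (bvec2 θ) y ∧ C ∩ A = ∅ ∧ T = Cᶜ}

/-- Erosion `A ⊖ B(0,r)`. -/
def Erosion (A : Set E2) (r : ℝ) : Set E2 :=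
  ⋃ x ∈ {x : E2 | closedBall x r ⊆ A}, closedBall x r

lemma quadrant_swap (y u v : E2) : Quadrant y u v = Quadrant y v u := by
  ext x
  constructor <;> rintro ⟨s, t, hs, ht, rfl⟩ <;> exact ⟨t, s, ht, hs, by module⟩

lemma quadrantCones_swap (b₁ b₂ y : E2) : QuadrantCones b₁ b₂ y = QuadrantCones b₂ b₁ y := by
  unfold QuadrantCones
  rw [quadrant_swap y b₁ b₂, quadrant_swap y (-b₁) b₂, quadrant_swap y b₁ (-b₂),
    quadrant_swap y (-b₁) (-b₂)]
  ext T
  simp only [Set.mem_insert_iff, Set.mem_singleton_iff]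
  tauto

lemma binner11 (θ : ℝ) : ⟪bvec1 θ, bvec1 θ⟫ = 1 := by
  simp only [bvec1, PiLp.inner_apply, Fin.sum_univ_two, RCLike.inner_apply]
  simp
  nlinarith [sin_sq_add_cos_sq θ]

lemma binner22 (θ : ℝ) : ⟪bvec2 θ, bvec2 θ⟫ = 1 := by
  simp only [bvec2, PiLp.inner_apply, Fin.sum_univ_two, RCLike.inner_apply]
  simp
  nlinarith [sin_sq_add_cos_sq θ]

lemma binner12 (θ : ℝ) : ⟪bvec1 θ, bvec2 θ⟫ = 0 := by
  simp [bvec1, bvec2, PiLp.inner_apply, Fin.sum_univ_two, RCLike.inner_apply]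
  ring

lemma bdecomp (θ : ℝ) (x : E2) : x = ⟪x, bvec1 θ⟫ • bvec1 θ + ⟪x, bvec2 θ⟫ • bvec2 θ := by
  ext i
  fin_cases i <;>
    simp [bvec1, bvec2, PiLp.inner_apply, Fin.sum_univ_two, RCLike.inner_apply] <;>
    [linear_combination (- x 0) * sin_sq_add_cos_sq θ;
     linear_combination (- x 1) * sin_sq_add_cos_sq θ]

set_option maxHeartbeats 3000000 in
lemma master (θ : ℝ) (e f : E2)
    (he : ⟪e,e⟫ = 1) (hf : ⟪f,f⟫ = 1) (hef : ⟪e,f⟫ = 0)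
    (hdec : ∀ x : E2, x = ⟪x,e⟫ • e + ⟪x,f⟫ • f)
    (hcones : ∀ y : E2, QuadrantCones (bvec1 θ) (bvec2 θ) y =
      {Quadrant y e f, Quadrant y (-e) f, Quadrant y e (-f), Quadrant y (-e) (-f)})
    (S : Set E2) (hScl : IsClosed S)
    (hbd : IsPathConnected (frontier S)) (hreg : S = closure (interior S))
    (a b z₀ : E2) (ha : a ∈ S) (hb : b ∈ S) (hz₀ : z₀ ∉ S)
    (hfa : ⟪a,f⟫ = ⟪z₀,f⟫) (hfb : ⟪b,f⟫ = ⟪z₀,f⟫)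
    (hua : ⟪a,e⟫ < ⟪z₀,e⟫) (hub : ⟪z₀,e⟫ < ⟪b,e⟫) :
    0 < volume (BHull θ S \ S) := by
  have hfe : ⟪f,e⟫ = 0 := by rw [real_inner_comm]; exact hef
  have hne : ‖e‖ = 1 := by
    have h := real_inner_self_eq_norm_mul_norm e
    rw [he] at h; nlinarith [norm_nonneg e]
  have hnf : ‖f‖ = 1 := by
    have h := real_inner_self_eq_norm_mul_norm f
    rw [hf] at h; nlinarith [norm_nonneg f]
  have hext : ∀ w w' : E2, ⟪w,e⟫ = ⟪w',e⟫ → ⟪w,f⟫ = ⟪w',f⟫ → w = w' := by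
    intro w w' h1 h2
    rw [hdec w, hdec w', h1, h2]
  have hinner : ∀ (q : E2) (s t σ τ : ℝ) (g : E2),
      ⟪q + s•(σ•e) + t•(τ•f), g⟫ = ⟪q,g⟫ + s*σ*⟪e,g⟫ + t*τ*⟪f,g⟫ := by
    intro q s t σ τ g
    simp only [inner_add_left, real_inner_smul_left]
    ring
  -- quadrant membership characterization
  have hquad : ∀ (σ τ : ℝ), σ*σ = 1 → τ*τ = 1 → ∀ q w : E2,
      (w ∈ Quadrant q (σ • e) (τ • f) ↔
        0 < σ*(⟪w,e⟫-⟪q,e⟫) ∧ 0 < τ*(⟪w,f⟫-⟪q,f⟫)) := by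
    intro σ τ hσ hτ q w
    constructor
    · rintro ⟨s, t, hs, ht, rfl⟩
      constructor
      · have h1 : ⟪q + s•(σ•e) + t•(τ•f), e⟫ = ⟪q,e⟫ + s*σ := by
          rw [hinner, he, hfe]; ring
        rw [h1]
        have h2 : σ*(⟪q,e⟫ + s*σ - ⟪q,e⟫) = s*(σ*σ) := by ring
        rw [h2, hσ, mul_one]; exact hs
      · have h1 : ⟪q + s•(σ•e) + t•(τ•f), f⟫ = ⟪q,f⟫ + t*τ := by
          rw [hinner, hf, hef]; ring
        rw [h1]
        have h2 : τ*(⟪q,f⟫ + t*τ - ⟪q,f⟫) = t*(τ*τ) := by ring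
        rw [h2, hτ, mul_one]; exact ht
    · rintro ⟨h1, h2⟩
      refine ⟨σ*(⟪w,e⟫-⟪q,e⟫), τ*(⟪w,f⟫-⟪q,f⟫), h1, h2, hext _ _ ?_ ?_⟩
      · have h3 : ⟪q + (σ*(⟪w,e⟫-⟪q,e⟫))•(σ•e) + (τ*(⟪w,f⟫-⟪q,f⟫))•(τ•f), e⟫
            = ⟪q,e⟫ + (σ*(⟪w,e⟫-⟪q,e⟫))*σ := by
          rw [hinner, he, hfe]; ring
        rw [h3]
        linear_combination (⟪q,e⟫ - ⟪w,e⟫) * hσ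
      · have h3 : ⟪q + (σ*(⟪w,e⟫-⟪q,e⟫))•(σ•e) + (τ*(⟪w,f⟫-⟪q,f⟫))•(τ•f), f⟫
            = ⟪q,f⟫ + (τ*(⟪w,f⟫-⟪q,f⟫))*τ := by
          rw [hinner, hf, hef]; ring
        rw [h3]
        linear_combination (⟪q,f⟫ - ⟪w,f⟫) * hτ
  -- escaping the hull
  have hBH : ∀ w : E2, w ∉ BHull θ S →
      ∃ q C, C ∈ QuadrantCones (bvec1 θ) (bvec2 θ) q ∧ C ∩ S = ∅ ∧ w ∈ C := by
    intro w hw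
    simp only [BHull, mem_sInter, mem_setOf_eq] at hw
    push_neg at hw
    obtain ⟨T, ⟨q, C, hC, hCS, rfl⟩, hwT⟩ := hw
    exact ⟨q, C, hC, hCS, by simpa using hwT⟩
  -- coordinate distance bounds
  have habse : ∀ w w' : E2, |⟪w,e⟫ - ⟪w',e⟫| ≤ dist w w' := by
    intro w w'
    rw [dist_eq_norm]
    have h := abs_real_inner_le_norm (w - w') e
    rw [hne, mul_one] at h
    simpa [inner_sub_left] using h
  have habsf : ∀ w w' : E2, |⟪w,f⟫ - ⟪w',f⟫| ≤ dist w w' := by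
    intro w w'
    rw [dist_eq_norm]
    have h := abs_real_inner_le_norm (w - w') f
    rw [hnf, mul_one] at h
    simpa [inner_sub_left] using h
  -- the line
  set c := ⟪z₀,f⟫ with hc
  set P : ℝ → E2 := fun t => t • e + c • f with hP
  have hPe : ∀ t, ⟪P t, e⟫ = t := by
    intro t
    show ⟪t • e + c • f, e⟫ = t
    rw [inner_add_left, real_inner_smul_left, real_inner_smul_left, he, hfe]; ring
  have hPf : ∀ t, ⟪P t, f⟫ = c := by
    intro t
    show ⟪t • e + c • f, f⟫ = c
    rw [inner_add_left, real_inner_smul_left, real_inner_smul_left, hf, hef]; ring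
  have hPcont : Continuous P := (continuous_id.smul continuous_const).add continuous_const
  have hPgen : ∀ w : E2, ⟪w,f⟫ = c → P ⟪w,e⟫ = w := by
    intro w hw
    exact hext _ _ (by rw [hPe]) (by rw [hPf, hw])
  have hPz₀ : P ⟪z₀,e⟫ = z₀ := hPgen z₀ rfl
  -- left and right endpoints
  set AL : Set ℝ := Iic ⟪z₀,e⟫ ∩ P ⁻¹' S with hAL
  set AR : Set ℝ := Ici ⟪z₀,e⟫ ∩ P ⁻¹' S with hAR
  have hALbdd : BddAbove AL := ⟨⟪z₀,e⟫, fun t ht => ht.1⟩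
  have hARbdd : BddBelow AR := ⟨⟪z₀,e⟫, fun t ht => ht.1⟩
  set uL : ℝ := sSup AL with huL
  set uR : ℝ := sInf AR with huR
  have huLmem : uL ∈ AL := by
    refine (isClosed_Iic.inter (hScl.preimage hPcont)).csSup_mem ⟨⟪a,e⟫, ?_, ?_⟩ hALbdd
    · exact le_of_lt hua
    · show P ⟪a,e⟫ ∈ S
      rw [hPgen a hfa]; exact ha
  have huRmem : uR ∈ AR := by
    refine (isClosed_Ici.inter (hScl.preimage hPcont)).csInf_mem ⟨⟪b,e⟫, ?_, ?_⟩ hARbdd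
    · exact le_of_lt hub
    · show P ⟪b,e⟫ ∈ S
      rw [hPgen b hfb]; exact hb
  have huLS : P uL ∈ S := huLmem.2
  have huRS : P uR ∈ S := huRmem.2
  have huLlt : uL < ⟪z₀,e⟫ := by
    rcases lt_or_eq_of_le (mem_Iic.1 huLmem.1) with h | h
    · exact h
    · exfalso; apply hz₀; rw [← hPz₀, ← h]; exact huLS
  have huRgt : ⟪z₀,e⟫ < uR := by
    rcases lt_or_eq_of_le (mem_Ici.1 huRmem.1) with h | h
    · exact h
    · exfalso; apply hz₀; rw [← hPz₀, h]; exact huRS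
  have hgap : ∀ t, uL < t → t < uR → P t ∉ S := by
    intro t h1 h2 hmem
    rcases le_or_gt t ⟪z₀,e⟫ with h | h
    · exact absurd (le_csSup hALbdd ⟨mem_Iic.2 h, hmem⟩) (not_le.2 h1)
    · exact absurd (csInf_le hARbdd ⟨mem_Ici.2 (le_of_lt h), hmem⟩) (not_le.2 h2)
  -- midpoint and free ball
  set m : ℝ := (uL + uR)/2 with hm
  set ε₀ : ℝ := (uR - uL)/2 with hε₀def
  have hε₀ : 0 < ε₀ := by
    have : uL < uR := lt_trans huLlt huRgt
    simp only [hε₀def]; linarith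
  have hmL : uL < m := by simp only [hm]; linarith [lt_trans huLlt huRgt]
  have hmR : m < uR := by simp only [hm]; linarith [lt_trans huLlt huRgt]
  have hmLε : uL = m - ε₀ := by simp only [hm, hε₀def]; ring
  have hmRε : uR = m + ε₀ := by simp only [hm, hε₀def]; ring
  set z : E2 := P m with hz
  have hzS : z ∉ S := hgap m hmL hmR
  have hze : ⟪z,e⟫ = m := hPe m
  have hzf : ⟪z,f⟫ = c := hPf m
  obtain ⟨ε, hεpos, hεball⟩ : ∃ ε > 0, ball z ε ⊆ Sᶜ :=
    Metric.mem_nhds_iff.1 (hScl.isOpen_compl.mem_nhds hzS)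
  set δ₀ : ℝ := min ε ε₀ with hδ₀def
  have hδ₀pos : 0 < δ₀ := lt_min hεpos hε₀
  have hδ₀ε : δ₀ ≤ ε := min_le_left _ _
  have hδ₀ε₀ : δ₀ ≤ ε₀ := min_le_right _ _
  -- endpoints on the frontier
  set xh : E2 := P uL with hxh
  set yh : E2 := P uR with hyh
  have hxhS : xh ∈ S := huLS
  have hyhS : yh ∈ S := huRS
  have hxhe : ⟪xh,e⟫ = uL := hPe uL
  have hxhf : ⟪xh,f⟫ = c := hPf uL
  have hyhe : ⟪yh,e⟫ = uR := hPe uR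
  have hyhf : ⟪yh,f⟫ = c := hPf uR
  have hPdist : ∀ s t : ℝ, dist (P s) (P t) = |s - t| := by
    intro s t
    rw [dist_eq_norm]
    have h1 : P s - P t = (s - t) • e := by simp only [hP]; module
    rw [h1, norm_smul, hne, mul_one, Real.norm_eq_abs]
  have hxhfr : xh ∈ frontier S := by
    rw [hScl.frontier_eq]
    refine ⟨hxhS, fun hint => ?_⟩
    obtain ⟨r, hrpos, hrball⟩ := Metric.mem_nhds_iff.1 (mem_interior_iff_mem_nhds.1 hint)
    have h1 : 0 < min r ε₀ := lt_min hrpos hε₀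
    refine hgap (uL + min r ε₀ / 2) (by linarith) (by
      have := min_le_right r ε₀; linarith) (hrball ?_)
    rw [mem_ball, hPdist]
    have := min_le_left r ε₀
    rw [abs_of_pos (by linarith)]
    linarith
  have hyhfr : yh ∈ frontier S := by
    rw [hScl.frontier_eq]
    refine ⟨hyhS, fun hint => ?_⟩
    obtain ⟨r, hrpos, hrball⟩ := Metric.mem_nhds_iff.1 (mem_interior_iff_mem_nhds.1 hint)
    have h1 : 0 < min r ε₀ := lt_min hrpos hε₀
    refine hgap (uR - min r ε₀ / 2) (by
      have := min_le_right r ε₀; linarith) (by linarith) (hrball ?_)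
    rw [mem_ball, hPdist]
    have := min_le_left r ε₀
    rw [abs_of_neg (by linarith)]
    linarith
  -- suppose the conclusion fails
  by_contra hvol
  have h0 : volume (BHull θ S \ S) = 0 := by
    rw [← le_zero_iff]; exact not_lt.1 hvol
  have hno_open : ∀ B : Set E2, IsOpen B → B.Nonempty → ¬ (B ⊆ BHull θ S \ S) := by
    intro B hB hBne hsub
    have h1 := measure_mono (μ := volume) hsub
    rw [h0, le_zero_iff] at h1
    exact (hB.measure_pos volume hBne).ne' h1
  -- the key step: an avoiding quadrant meeting a small ball near z on side η
  -- forces a free quadrant with corner near z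
  have hstep : ∀ (σ τ η : ℝ), σ*σ = 1 → τ*τ = 1 → η*η = 1 → ∀ (q : E2) (δ : ℝ),
      0 < δ → δ ≤ δ₀ → Quadrant q (σ • e) (τ • f) ∩ S = ∅ →
      ∀ w, w ∈ Quadrant q (σ • e) (τ • f) → dist w z < δ → 0 < η*(⟪w,f⟫ - c) →
      ∀ p ∈ S, ¬(δ ≤ σ*(⟪p,e⟫ - m) ∧ δ ≤ η*(⟪p,f⟫ - c)) := by
    intro σ τ η hσ hτ hη q δ hδpos hδle hfree w hwQ hwz hwη
    obtain ⟨hw1, hw2⟩ := (hquad σ τ hσ hτ q w).1 hwQ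
    have hde : |⟪w,e⟫ - m| < δ := by
      have h1 := habse w z
      rw [hze] at h1
      exact lt_of_le_of_lt h1 hwz
    have hdf : |⟪w,f⟫ - c| < δ := by
      have h1 := habsf w z
      rw [hzf] at h1
      exact lt_of_le_of_lt h1 hwz
    have hde1 := abs_lt.1 hde
    have hdf1 := abs_lt.1 hdf
    have hσc := mul_self_eq_one_iff.1 hσ
    have hτc := mul_self_eq_one_iff.1 hτ
    have hηc := mul_self_eq_one_iff.1 hη
    -- claim 1 : the corner is on the far side of the line from the segment
    have hc1 : τ*(c - ⟪q,f⟫) ≤ 0 := by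
      by_contra hcon
      push_neg at hcon
      rcases hσc with h1 | h1
      · have hyQ : yh ∈ Quadrant q (σ • e) (τ • f) := by
          refine (hquad σ τ hσ hτ q yh).2 ⟨?_, ?_⟩
          · rw [hyhe, h1, one_mul]
            rw [h1, one_mul] at hw1
            rw [hmRε]
            linarith
          · rw [hyhf]; linarith [hcon]
        exact Set.eq_empty_iff_forall_notMem.1 hfree yh ⟨hyQ, hyhS⟩
      · have hxQ : xh ∈ Quadrant q (σ • e) (τ • f) := by
          refine (hquad σ τ hσ hτ q xh).2 ⟨?_, ?_⟩
          · rw [hxhe, h1]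
            rw [h1] at hw1
            rw [hmLε]
            linarith
          · rw [hxhf]; linarith [hcon]
        exact Set.eq_empty_iff_forall_notMem.1 hfree xh ⟨hxQ, hxhS⟩
    -- claim 2 : τ = η
    have hc2 : τ = η := by
      rcases hτc with h1 | h1 <;> rcases hηc with h2 | h2
      · rw [h1, h2]
      · exfalso; rw [h1] at hc1 hw2; rw [h2] at hwη; linarith
      · exfalso; rw [h1] at hc1 hw2; rw [h2] at hwη; linarith
      · rw [h1, h2]
    rw [hc2] at hw2 hc1
    -- conclusion
    rintro p hp ⟨hp1, hp2⟩
    apply Set.eq_empty_iff_forall_notMem.1 hfree p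
    refine ⟨(hquad σ τ hσ hτ q p).2 ⟨?_, ?_⟩, hp⟩
    · have h2 : -|⟪w,e⟫ - m| ≤ σ*(m - ⟪w,e⟫) := by
        rcases hσc with h | h <;> rw [h] <;>
          [linarith [le_abs_self (⟪w,e⟫ - m)]; linarith [neg_abs_le (⟪w,e⟫ - m)]]
      have h2' : -δ < σ*(m - ⟪w,e⟫) := lt_of_lt_of_le (by linarith [hde]) h2
      linarith
    · rw [hc2]
      have h3 : η*(⟪w,f⟫ - c) < δ := by
        rcases hηc with h | h <;> rw [h] <;>
          [linarith [le_abs_self (⟪w,f⟫ - c)]; linarith [neg_abs_le (⟪w,f⟫ - c)]]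
      linarith
  -- for each side η, some sign σ gives a fully free quadrant cornered at z
  have hkey : ∀ η : ℝ, η*η = 1 → ∃ σ : ℝ, σ*σ = 1 ∧
      ∀ p ∈ S, ¬(0 < σ*(⟪p,e⟫ - m) ∧ 0 < η*(⟪p,f⟫ - c)) := by
    intro η hη
    have hηabs : |η| = 1 := by
      rcases mul_self_eq_one_iff.1 hη with h | h <;> rw [h] <;> norm_num
    have hδstep : ∀ δ : ℝ, 0 < δ → δ ≤ δ₀ →
        (∀ p ∈ S, ¬(δ ≤ 1*(⟪p,e⟫ - m) ∧ δ ≤ η*(⟪p,f⟫ - c))) ∨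
        (∀ p ∈ S, ¬(δ ≤ (-1)*(⟪p,e⟫ - m) ∧ δ ≤ η*(⟪p,f⟫ - c))) := by
      intro δ hδ1 hδ2
      set B : Set E2 := ball z δ ∩ {w | 0 < η*(⟪w,f⟫ - c)} with hBdef
      have hBopen : IsOpen B := isOpen_ball.inter (isOpen_lt continuous_const
        (continuous_const.mul ((continuous_id.inner continuous_const).sub continuous_const)))
      have hBne : B.Nonempty := by
        refine ⟨z + ((η*δ)/2) • f, ?_, ?_⟩
        · rw [mem_ball, dist_eq_norm]
          have h1 : z + ((η*δ)/2) • f - z = ((η*δ)/2) • f := by module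
          rw [h1, norm_smul, hnf, mul_one, Real.norm_eq_abs]
          rw [abs_div, abs_mul, hηabs, one_mul]
          rw [abs_of_pos hδ1]
          norm_num
          linarith
        · show 0 < η*(⟪z + ((η*δ)/2) • f, f⟫ - c)
          have h1 : ⟪z + ((η*δ)/2) • f, f⟫ = c + (η*δ)/2 := by
            rw [inner_add_left, real_inner_smul_left, hf, hzf]; ring
          rw [h1]
          have h2 : η*(c + (η*δ)/2 - c) = (η*η)*(δ/2) := by ring
          rw [h2, hη]; linarith
      obtain ⟨w, hwB, hwn⟩ := not_subset.1 (hno_open B hBopen hBne)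
      have hwS : w ∉ S := fun h =>
        (hεball (ball_subset_ball (le_trans hδ2 hδ₀ε) hwB.1)) h
      have hwBH : w ∉ BHull θ S := fun h => hwn ⟨h, hwS⟩
      obtain ⟨q, C, hC, hCS, hwC⟩ := hBH w hwBH
      rw [hcones q] at hC
      have hwz : dist w z < δ := mem_ball.1 hwB.1
      have hwη : 0 < η*(⟪w,f⟫ - c) := hwB.2
      simp only [Set.mem_insert_iff, Set.mem_singleton_iff] at hC
      rcases hC with h | h | h | h <;> rw [h] at hCS hwC
      · exact Or.inl (hstep 1 1 η (by norm_num) (by norm_num) hη q δ hδ1 hδ2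
          (by simpa using hCS) w (by simpa using hwC) hwz hwη)
      · exact Or.inr (hstep (-1) 1 η (by norm_num) (by norm_num) hη q δ hδ1 hδ2
          (by simpa using hCS) w (by simpa using hwC) hwz hwη)
      · exact Or.inl (hstep 1 (-1) η (by norm_num) (by norm_num) hη q δ hδ1 hδ2
          (by simpa using hCS) w (by simpa using hwC) hwz hwη)
      · exact Or.inr (hstep (-1) (-1) η (by norm_num) (by norm_num) hη q δ hδ1 hδ2
          (by simpa using hCS) w (by simpa using hwC) hwz hwη)
    have hσex : ∃ σ : ℝ, σ*σ = 1 ∧ ∀ δ' : ℝ, 0 < δ' →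
        ∃ δ : ℝ, 0 < δ ∧ δ ≤ δ' ∧ ∀ p ∈ S, ¬(δ ≤ σ*(⟪p,e⟫ - m) ∧ δ ≤ η*(⟪p,f⟫ - c)) := by
      by_contra hcon
      push_neg at hcon
      obtain ⟨δ₁, hδ₁, H1⟩ := hcon 1 (by norm_num)
      obtain ⟨δ₂, hδ₂, H2⟩ := hcon (-1) (by norm_num)
      have hpos : 0 < min (min δ₁ δ₂) δ₀ := lt_min (lt_min hδ₁ hδ₂) hδ₀pos
      have hle0 : min (min δ₁ δ₂) δ₀ ≤ δ₀ := min_le_right _ _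
      have hle1 : min (min δ₁ δ₂) δ₀ ≤ δ₁ := le_trans (min_le_left _ _) (min_le_left _ _)
      have hle2 : min (min δ₁ δ₂) δ₀ ≤ δ₂ := le_trans (min_le_left _ _) (min_le_right _ _)
      rcases hδstep (min (min δ₁ δ₂) δ₀) hpos hle0 with h | h
      · obtain ⟨p, hp, hX⟩ := H1 _ hpos hle1
        exact h p hp hX
      · obtain ⟨p, hp, hX⟩ := H2 _ hpos hle2
        exact h p hp hX
    obtain ⟨σ, hσ, hPσ⟩ := hσex
    refine ⟨σ, hσ, ?_⟩
    rintro p hp ⟨h1, h2⟩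
    obtain ⟨δ, hδpos, hδle, hfree⟩ := hPσ (min (σ*(⟪p,e⟫-m)) (η*(⟪p,f⟫-c))) (lt_min h1 h2)
    exact hfree p hp ⟨le_trans hδle (min_le_left _ _), le_trans hδle (min_le_right _ _)⟩
  obtain ⟨σ, hσ, HUp'⟩ := hkey 1 (by norm_num)
  obtain ⟨τ, hτ, HDn'⟩ := hkey (-1) (by norm_num)
  have HUp : ∀ p ∈ S, ¬(0 < σ*(⟪p,e⟫ - m) ∧ c < ⟪p,f⟫) := by
    rintro p hp ⟨h1, h2⟩
    exact HUp' p hp ⟨h1, by rw [one_mul]; linarith⟩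
  have HDn : ∀ p ∈ S, ¬(0 < τ*(⟪p,e⟫ - m) ∧ ⟪p,f⟫ < c) := by
    rintro p hp ⟨h1, h2⟩
    exact HDn' p hp ⟨h1, by linarith⟩
  clear HUp' HDn'
  have hfup : ∀ (p : E2) (ρ : ℝ), 0 < ρ → ⟪p + (ρ/2) • f, e⟫ = ⟪p,e⟫ ∧
      ⟪p + (ρ/2) • f, f⟫ = ⟪p,f⟫ + ρ/2 ∧ dist (p + (ρ/2) • f) p < ρ := by
    intro p ρ hρ
    refine ⟨?_, ?_, ?_⟩
    · rw [inner_add_left, real_inner_smul_left, hfe]; ring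
    · rw [inner_add_left, real_inner_smul_left, hf]; ring
    · rw [dist_eq_norm]
      have h1 : p + (ρ/2) • f - p = (ρ/2) • f := by module
      rw [h1, norm_smul, hnf, mul_one, Real.norm_eq_abs, abs_of_pos (by linarith)]
      linarith
  have hconte : Continuous fun w : E2 => ⟪w,e⟫ := continuous_id.inner continuous_const
  have hcontf : Continuous fun w : E2 => ⟪w,f⟫ := continuous_id.inner continuous_const
  have hSline : ∀ w ∈ S, ⟪w,f⟫ = c → ⟪w,e⟫ ≤ uL ∨ uR ≤ ⟪w,e⟫ := by
    intro w hw hwf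
    by_contra hcon
    push_neg at hcon
    refine hgap ⟪w,e⟫ hcon.1 hcon.2 ?_
    rw [hPgen w hwf]; exact hw
  obtain ⟨γ, hγ⟩ := hbd.joinedIn xh hxhfr yh hyhfr
  have hKpc : IsPreconnected (range γ) := (isConnected_range γ.continuous).isPreconnected
  have hKS : range γ ⊆ S := by
    rintro w ⟨t, rfl⟩
    have h1 := hγ t
    rw [hScl.frontier_eq] at h1
    exact h1.1
  have hxhK : xh ∈ range γ := ⟨0, by simp⟩
  have hyhK : yh ∈ range γ := ⟨1, by simp⟩
  rcases mul_self_eq_one_iff.1 hσ with hσ1 | hσ1 <;> rcases mul_self_eq_one_iff.1 hτ with hτ1 | hτ1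
  · -- σ = 1, τ = 1 : interior cannot approach yh
    have hyc : yh ∈ closure (interior S) := by rw [← hreg]; exact hyhS
    obtain ⟨p, hpint, hpd⟩ := Metric.mem_closure_iff.1 hyc ε₀ hε₀
    have hpS : p ∈ S := interior_subset hpint
    have hpe : m < ⟪p,e⟫ := by
      have h1 := habse yh p
      rw [hyhe] at h1
      have h2 := abs_lt.1 (lt_of_le_of_lt h1 hpd)
      rw [hmRε] at h2
      linarith [h2.2]
    obtain ⟨ρ, hρpos, hρball⟩ := Metric.mem_nhds_iff.1 (mem_interior_iff_mem_nhds.1 hpint)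
    rcases lt_trichotomy ⟪p,f⟫ c with h | h | h
    · exact HDn p hpS ⟨by rw [hτ1]; linarith, h⟩
    · obtain ⟨he', hf', hd'⟩ := hfup p ρ hρpos
      have hp'S : p + (ρ/2) • f ∈ S := hρball (mem_ball.2 (by rw [dist_comm] at hd' ⊢; exact hd'))
      exact HUp _ hp'S ⟨by rw [hσ1, he']; linarith, by rw [hf', h]; linarith⟩
    · exact HUp p hpS ⟨by rw [hσ1]; linarith, h⟩
  · -- σ = 1, τ = -1 : separation
    set U₁ : Set E2 := {w | ⟪w,e⟫ < m} ∪ {w | c < ⟪w,f⟫ ∧ ⟪w,e⟫ < uR} with hU₁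
    set U₂ : Set E2 := {w | m < ⟪w,e⟫} ∪ {w | ⟪w,f⟫ < c ∧ uL < ⟪w,e⟫} with hU₂
    have hU₁o : IsOpen U₁ := (isOpen_lt hconte continuous_const).union
      ((isOpen_lt continuous_const hcontf).inter (isOpen_lt hconte continuous_const))
    have hU₂o : IsOpen U₂ := (isOpen_lt continuous_const hconte).union
      ((isOpen_lt hcontf continuous_const).inter (isOpen_lt continuous_const hconte))
    have hcover : range γ ⊆ U₁ ∪ U₂ := by
      intro w hw
      have hwS := hKS hw
      rcases lt_trichotomy ⟪w,f⟫ c with h | h | h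
      · have h1 : ¬ (0 < τ*(⟪w,e⟫-m)) := fun hx => HDn w hwS ⟨hx, h⟩
        rw [hτ1] at h1
        push_neg at h1
        exact Or.inr (Or.inr ⟨h, by linarith⟩)
      · rcases hSline w hwS h with h2 | h2
        · exact Or.inl (Or.inl (by simp only [Set.mem_setOf_eq]; linarith))
        · exact Or.inr (Or.inl (by simp only [Set.mem_setOf_eq]; linarith))
      · have h1 : ¬ (0 < σ*(⟪w,e⟫-m)) := fun hx => HUp w hwS ⟨hx, h⟩
        rw [hσ1] at h1
        push_neg at h1
        exact Or.inl (Or.inr ⟨h, by linarith⟩)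
    have h1ne : (range γ ∩ U₁).Nonempty :=
      ⟨xh, hxhK, Or.inl (by simp only [Set.mem_setOf_eq]; rw [hxhe]; exact hmL)⟩
    have h2ne : (range γ ∩ U₂).Nonempty :=
      ⟨yh, hyhK, Or.inl (by simp only [Set.mem_setOf_eq]; rw [hyhe]; exact hmR)⟩
    obtain ⟨w, hwK, hw1, hw2⟩ := hKpc U₁ U₂ hU₁o hU₂o hcover h1ne h2ne
    have hwS := hKS hwK
    rcases hw1 with h1 | h1 <;> rcases hw2 with h2 | h2 <;>
      simp only [Set.mem_setOf_eq] at h1 h2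
    · linarith
    · exact HDn w hwS ⟨by rw [hτ1]; linarith, h2.1⟩
    · exact HUp w hwS ⟨by rw [hσ1]; linarith [h1.1], h1.1⟩
    · linarith [h1.1, h2.1]
  · -- σ = -1, τ = 1 : separation (mirrored)
    set U₁ : Set E2 := {w | ⟪w,e⟫ < m} ∪ {w | ⟪w,f⟫ < c ∧ ⟪w,e⟫ < uR} with hU₁
    set U₂ : Set E2 := {w | m < ⟪w,e⟫} ∪ {w | c < ⟪w,f⟫ ∧ uL < ⟪w,e⟫} with hU₂
    have hU₁o : IsOpen U₁ := (isOpen_lt hconte continuous_const).union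
      ((isOpen_lt hcontf continuous_const).inter (isOpen_lt hconte continuous_const))
    have hU₂o : IsOpen U₂ := (isOpen_lt continuous_const hconte).union
      ((isOpen_lt continuous_const hcontf).inter (isOpen_lt continuous_const hconte))
    have hcover : range γ ⊆ U₁ ∪ U₂ := by
      intro w hw
      have hwS := hKS hw
      rcases lt_trichotomy ⟪w,f⟫ c with h | h | h
      · have h1 : ¬ (0 < τ*(⟪w,e⟫-m)) := fun hx => HDn w hwS ⟨hx, h⟩
        rw [hτ1] at h1
        push_neg at h1
        exact Or.inl (Or.inr ⟨h, by linarith⟩)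
      · rcases hSline w hwS h with h2 | h2
        · exact Or.inl (Or.inl (by simp only [Set.mem_setOf_eq]; linarith))
        · exact Or.inr (Or.inl (by simp only [Set.mem_setOf_eq]; linarith))
      · have h1 : ¬ (0 < σ*(⟪w,e⟫-m)) := fun hx => HUp w hwS ⟨hx, h⟩
        rw [hσ1] at h1
        push_neg at h1
        exact Or.inr (Or.inr ⟨h, by linarith⟩)
    have h1ne : (range γ ∩ U₁).Nonempty :=
      ⟨xh, hxhK, Or.inl (by simp only [Set.mem_setOf_eq]; rw [hxhe]; exact hmL)⟩
    have h2ne : (range γ ∩ U₂).Nonempty :=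
      ⟨yh, hyhK, Or.inl (by simp only [Set.mem_setOf_eq]; rw [hyhe]; exact hmR)⟩
    obtain ⟨w, hwK, hw1, hw2⟩ := hKpc U₁ U₂ hU₁o hU₂o hcover h1ne h2ne
    have hwS := hKS hwK
    rcases hw1 with h1 | h1 <;> rcases hw2 with h2 | h2 <;>
      simp only [Set.mem_setOf_eq] at h1 h2
    · linarith
    · exact HUp w hwS ⟨by rw [hσ1]; linarith, h2.1⟩
    · exact HDn w hwS ⟨by rw [hτ1]; linarith [h1.1], h1.1⟩
    · linarith [h1.1, h2.1]
  · -- σ = -1, τ = -1 : interior cannot approach xh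
    have hxc : xh ∈ closure (interior S) := by rw [← hreg]; exact hxhS
    obtain ⟨p, hpint, hpd⟩ := Metric.mem_closure_iff.1 hxc ε₀ hε₀
    have hpS : p ∈ S := interior_subset hpint
    have hpe : ⟪p,e⟫ < m := by
      have h1 := habse xh p
      rw [hxhe] at h1
      have h2 := abs_lt.1 (lt_of_le_of_lt h1 hpd)
      rw [hmLε] at h2
      linarith [h2.1]
    obtain ⟨ρ, hρpos, hρball⟩ := Metric.mem_nhds_iff.1 (mem_interior_iff_mem_nhds.1 hpint)
    rcases lt_trichotomy ⟪p,f⟫ c with h | h | h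
    · exact HDn p hpS ⟨by rw [hτ1]; linarith, h⟩
    · obtain ⟨he', hf', hd'⟩ := hfup p ρ hρpos
      have hp'S : p + (ρ/2) • f ∈ S := hρball (mem_ball.2 (by rw [dist_comm] at hd' ⊢; exact hd'))
      exact HUp _ hp'S ⟨by rw [hσ1, he']; linarith, by rw [hf', h]; linarith⟩
    · exact HUp p hpS ⟨by rw [hσ1]; linarith, h⟩




lemma between_aux (α β u v w : ℝ) (hα : 0 ≤ α) (hβ : 0 ≤ β) (hαβ : α + β = 1)
    (hw : w = α*u + β*v) (h1 : u < w) (h2 : v ≠ w) : w < v := by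
  rcases eq_or_lt_of_le hα with h | h
  · have hβ1 : β = 1 := by linarith
    rw [← h, hβ1] at hw
    simp at hw
    exact absurd hw.symm h2
  · by_contra hcon
    push_neg at hcon
    have e1 : α*u < α*w := mul_lt_mul_of_pos_left h1 h
    have e2 : β*v ≤ β*w := mul_le_mul_of_nonneg_left hcon hβ
    have e3 : α*w + β*w = w := by rw [← add_mul, hαβ, one_mul]
    linarith

/-- if `S` is `θ₀`-biconvex but not `θ`-biconvex, then
`𝔹_θ(S) \ S` has positive Lebesgue measure. -/
theorem bhull_wrong_angle_pos_measure (S : Set E2) (hScomp : IsCompact S)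
    (hbd : IsPathConnected (frontier S)) (hreg : S = closure (interior S))
    (θ₀ θ : ℝ) (hθ₀ : θ₀ ∈ Ico (0 : ℝ) (π / 2)) (hθ : θ ∈ Ico (0 : ℝ) (π / 2))
    (hne : θ ≠ θ₀) (hbc : ThetaBiconvex θ₀ S) (hnbc : ¬ ThetaBiconvex θ S) :
    0 < volume (BHull θ S \ S) := by
  have hScl : IsClosed S := hScomp.isClosed
  unfold ThetaBiconvex Biconvex at hnbc
  push_neg at hnbc
  obtain ⟨p, hp⟩ := hnbc
  have hp' : (¬ Convex ℝ (lineThru p (bvec1 θ) ∩ S)) ∨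
      (¬ Convex ℝ (lineThru p (bvec2 θ) ∩ S)) := by
    by_cases hc : Convex ℝ (lineThru p (bvec1 θ) ∩ S)
    · exact Or.inr (hp hc)
    · exact Or.inl hc
  clear hp
  rcases hp' with hp | hp
  all_goals (
    unfold Convex StarConvex at hp
    push_neg at hp
    obtain ⟨x, hxm, y, hym, α, β, hα, hβ, hαβ, hnot⟩ := hp)
  -- case 1 : failure of convexity along bvec1
  · set e : E2 := bvec1 θ with hedef
    set f : E2 := bvec2 θ with hfdef
    have he : ⟪e,e⟫ = 1 := binner11 θ
    have hf : ⟪f,f⟫ = 1 := binner22 θ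
    have hef : ⟪e,f⟫ = 0 := binner12 θ
    have hdec : ∀ w : E2, w = ⟪w,e⟫ • e + ⟪w,f⟫ • f := bdecomp θ
    have hcones : ∀ y : E2, QuadrantCones (bvec1 θ) (bvec2 θ) y =
        {Quadrant y e f, Quadrant y (-e) f, Quadrant y e (-f), Quadrant y (-e) (-f)} :=
      fun y => rfl
    have hext : ∀ w w' : E2, ⟪w,e⟫ = ⟪w',e⟫ → ⟪w,f⟫ = ⟪w',f⟫ → w = w' := by
      intro w w' h1 h2
      rw [hdec w, hdec w', h1, h2]
    obtain ⟨t₁, ht₁⟩ := hxm.1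
    obtain ⟨t₂, ht₂⟩ := hym.1
    have hz₀line : α • x + β • y ∈ lineThru p e := by
      refine ⟨α*t₁+β*t₂, ?_⟩
      rw [ht₁, ht₂]
      have h1 : α • (p + t₁ • e) + β • (p + t₂ • e) = (α+β) • p + (α*t₁+β*t₂) • e := by
        module
      rw [h1, hαβ, one_smul]
    have hz₀S : α • x + β • y ∉ S := fun h => hnot ⟨hz₀line, h⟩
    have hlinef : ∀ w ∈ lineThru p e, ⟪w,f⟫ = ⟪p,f⟫ := by
      rintro w ⟨t, rfl⟩
      rw [inner_add_left, real_inner_smul_left, hef]; ring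
    have hfx : ⟪x,f⟫ = ⟪α • x + β • y,f⟫ := by
      rw [hlinef x hxm.1, hlinef _ hz₀line]
    have hfy : ⟪y,f⟫ = ⟪α • x + β • y,f⟫ := by
      rw [hlinef y hym.1, hlinef _ hz₀line]
    have hz₀e : ⟪α • x + β • y,e⟫ = α*⟪x,e⟫ + β*⟪y,e⟫ := by
      rw [inner_add_left, real_inner_smul_left, real_inner_smul_left]
    have hnex : ⟪x,e⟫ ≠ ⟪α • x + β • y,e⟫ := fun h =>
      hz₀S (hext x _ h hfx ▸ hxm.2)
    have hney : ⟪y,e⟫ ≠ ⟪α • x + β • y,e⟫ := fun h =>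
      hz₀S (hext y _ h hfy ▸ hym.2)
    rcases lt_or_gt_of_ne hnex with h1 | h1
    · have h2 : ⟪α • x + β • y,e⟫ < ⟪y,e⟫ :=
        between_aux α β ⟪x,e⟫ ⟪y,e⟫ _ hα hβ hαβ hz₀e h1 hney
      exact master θ e f he hf hef hdec hcones S hScl hbd hreg x y _ hxm.2 hym.2 hz₀S
        hfx hfy h1 h2
    · have h2 : ⟪y,e⟫ < ⟪α • x + β • y,e⟫ := by
        have h3 := between_aux α β (-⟪x,e⟫) (-⟪y,e⟫) (-⟪α • x + β • y,e⟫) hα hβ hαβ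
          (by rw [hz₀e]; ring) (by linarith) (by intro hc; exact hney (by linarith))
        linarith
      exact master θ e f he hf hef hdec hcones S hScl hbd hreg y x _ hym.2 hxm.2 hz₀S
        hfy hfx h2 h1
  -- case 2 : failure of convexity along bvec2
  · set e : E2 := bvec2 θ with hedef
    set f : E2 := bvec1 θ with hfdef
    have he : ⟪e,e⟫ = 1 := binner22 θ
    have hf : ⟪f,f⟫ = 1 := binner11 θ
    have hef : ⟪e,f⟫ = 0 := by
      rw [real_inner_comm]; exact binner12 θ
    have hdec : ∀ w : E2, w = ⟪w,e⟫ • e + ⟪w,f⟫ • f := fun w =>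
      (bdecomp θ w).trans (add_comm _ _)
    have hcones : ∀ y : E2, QuadrantCones (bvec1 θ) (bvec2 θ) y =
        {Quadrant y e f, Quadrant y (-e) f, Quadrant y e (-f), Quadrant y (-e) (-f)} := by
      intro y
      rw [quadrantCones_swap]
      rfl
    have hext : ∀ w w' : E2, ⟪w,e⟫ = ⟪w',e⟫ → ⟪w,f⟫ = ⟪w',f⟫ → w = w' := by
      intro w w' h1 h2
      rw [hdec w, hdec w', h1, h2]
    obtain ⟨t₁, ht₁⟩ := hxm.1
    obtain ⟨t₂, ht₂⟩ := hym.1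
    have hz₀line : α • x + β • y ∈ lineThru p e := by
      refine ⟨α*t₁+β*t₂, ?_⟩
      rw [ht₁, ht₂]
      have h1 : α • (p + t₁ • e) + β • (p + t₂ • e) = (α+β) • p + (α*t₁+β*t₂) • e := by
        module
      rw [h1, hαβ, one_smul]
    have hz₀S : α • x + β • y ∉ S := fun h => hnot ⟨hz₀line, h⟩
    have hlinef : ∀ w ∈ lineThru p e, ⟪w,f⟫ = ⟪p,f⟫ := by
      rintro w ⟨t, rfl⟩
      rw [inner_add_left, real_inner_smul_left, hef]; ring
    have hfx : ⟪x,f⟫ = ⟪α • x + β • y,f⟫ := by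
      rw [hlinef x hxm.1, hlinef _ hz₀line]
    have hfy : ⟪y,f⟫ = ⟪α • x + β • y,f⟫ := by
      rw [hlinef y hym.1, hlinef _ hz₀line]
    have hz₀e : ⟪α • x + β • y,e⟫ = α*⟪x,e⟫ + β*⟪y,e⟫ := by
      rw [inner_add_left, real_inner_smul_left, real_inner_smul_left]
    have hnex : ⟪x,e⟫ ≠ ⟪α • x + β • y,e⟫ := fun h =>
      hz₀S (hext x _ h hfx ▸ hxm.2)
    have hney : ⟪y,e⟫ ≠ ⟪α • x + β • y,e⟫ := fun h =>
      hz₀S (hext y _ h hfy ▸ hym.2)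
    rcases lt_or_gt_of_ne hnex with h1 | h1
    · have h2 : ⟪α • x + β • y,e⟫ < ⟪y,e⟫ :=
        between_aux α β ⟪x,e⟫ ⟪y,e⟫ _ hα hβ hαβ hz₀e h1 hney
      exact master θ e f he hf hef hdec hcones S hScl hbd hreg x y _ hxm.2 hym.2 hz₀S
        hfx hfy h1 h2
    · have h2 : ⟪y,e⟫ < ⟪α • x + β • y,e⟫ := by
        have h3 := between_aux α β (-⟪x,e⟫) (-⟪y,e⟫) (-⟪α • x + β • y,e⟫) hα hβ hαβ
          (by rw [hz₀e]; ring) (by linarith) (by intro hc; exact hney (by linarith))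
        linarith
      exact master θ e f he hf hef hdec hcones S hScl hbd hreg y x _ hym.2 hxm.2 hz₀S
        hfy hfx h2 h1
end
end

section
/- There exists a compact set S ⊆ ℝ² that is biconvex (with respect to the canonical axes), equal to the closure of its interior, with path-connected boundary, but which is not α-convex for any α > 0 (i.e., S differs from its α-convex hull for every α > 0). -/
noncomputable section

open Set Metric MeasureTheory Filter Real
open scoped RealInnerProductSpace Topology symmDiff

/-- The `α`-convex hull of a set: intersection of complements of all open balls
of radius `α` disjoint from the set. -/
def AlphaHull (α : ℝ) (A : Set E2) : Set E2 :=
  ⋂₀ {T | ∃ x : E2, Metric.ball x α ∩ A = ∅ ∧ T = (Metric.ball x α)ᶜ}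

/-! ### Auxiliary construction: the L-shaped set -/

/-- A point of the plane from two coordinates. -/
noncomputable def pt (a b : ℝ) : E2 := (WithLp.equiv 2 (Fin 2 → ℝ)).symm ![a, b]

@[simp] lemma pt_apply0 (a b : ℝ) : pt a b 0 = a := by simp [pt]
@[simp] lemma pt_apply1 (a b : ℝ) : pt a b 1 = b := by simp [pt]

lemma distE (x y : E2) : dist x y = Real.sqrt ((x 0 - y 0)^2 + (x 1 - y 1)^2) := by
  rw [EuclideanSpace.dist_eq, Fin.sum_univ_two]
  simp [Real.dist_eq, sq_abs]

lemma le_distE {α : ℝ} (hα : 0 ≤ α) (x y : E2) :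
    α ≤ dist x y ↔ α^2 ≤ (x 0 - y 0)^2 + (x 1 - y 1)^2 := by
  rw [distE, Real.le_sqrt hα (by positivity)]

lemma distE_lt {ε : ℝ} (hε : 0 < ε) (x y : E2) :
    dist x y < ε ↔ (x 0 - y 0)^2 + (x 1 - y 1)^2 < ε^2 := by
  rw [distE, Real.sqrt_lt' hε]

lemma distE_le {r : ℝ} (hr : 0 ≤ r) (x y : E2)
    (h : (x 0 - y 0)^2 + (x 1 - y 1)^2 ≤ r^2) : dist x y ≤ r := by
  rw [distE]
  have := Real.sqrt_le_sqrt h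
  rwa [Real.sqrt_sq hr] at this

@[simp] lemma b1_app0 : bvec1 0 0 = 1 := by simp [bvec1]
@[simp] lemma b1_app1 : bvec1 0 1 = 0 := by simp [bvec1]
@[simp] lemma b2_app0 : bvec2 0 0 = 0 := by simp [bvec2]
@[simp] lemma b2_app1 : bvec2 0 1 = 1 := by simp [bvec2]

lemma combo_le {a b x y m : ℝ} (ha : 0 ≤ a) (hb : 0 ≤ b) (hab : a + b = 1)
    (hx : x ≤ m) (hy : y ≤ m) : a*x + b*y ≤ m := by
  calc a*x + b*y ≤ a*m + b*m :=
        add_le_add (mul_le_mul_of_nonneg_left hx ha) (mul_le_mul_of_nonneg_left hy hb)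
    _ = m := by rw [← add_mul, hab, one_mul]

lemma combo_ge {a b x y m : ℝ} (ha : 0 ≤ a) (hb : 0 ≤ b) (hab : a + b = 1)
    (hx : m ≤ x) (hy : m ≤ y) : m ≤ a*x + b*y := by
  calc m = a*m + b*m := by rw [← add_mul, hab, one_mul]
    _ ≤ a*x + b*y :=
        add_le_add (mul_le_mul_of_nonneg_left hx ha) (mul_le_mul_of_nonneg_left hy hb)

lemma lineThru_convex (p v : E2) : Convex ℝ (lineThru p v) := by
  rintro x ⟨s, rfl⟩ y ⟨t, rfl⟩ a b ha hb hab
  refine ⟨a*s + b*t, ?_⟩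
  match_scalars
  · linear_combination hab
  · ring

/-- The L-shaped region `[0,2]² \ (1,2]×(1,2]`. -/
def SL : Set E2 :=
  {x | (0 ≤ x 0 ∧ x 0 ≤ 2) ∧ (0 ≤ x 1 ∧ x 1 ≤ 2) ∧ (x 0 ≤ 1 ∨ x 1 ≤ 1)}

@[simp] lemma combo_apply (a b : ℝ) (x y : E2) (i : Fin 2) :
    (a • x + b • y) i = a * x i + b * y i := by simp

lemma SL_closed : IsClosed SL := by
  have h0 : Continuous fun x : E2 => x 0 := by fun_prop
  have h1 : Continuous fun x : E2 => x 1 := by fun_prop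
  have : SL = ((fun x : E2 => x 0) ⁻¹' Icc 0 2) ∩ ((fun x : E2 => x 1) ⁻¹' Icc 0 2) ∩
      (((fun x : E2 => x 0) ⁻¹' Iic 1) ∪ ((fun x : E2 => x 1) ⁻¹' Iic 1)) := by
    ext x; simp [SL, mem_Icc, mem_Iic]; tauto
  rw [this]
  exact (((isClosed_Icc.preimage h0).inter (isClosed_Icc.preimage h1)).inter
    ((isClosed_Iic.preimage h0).union (isClosed_Iic.preimage h1)))

lemma SL_compact : IsCompact SL := by
  refine (isCompact_closedBall (0:E2) 4).of_isClosed_subset SL_closed ?_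
  intro x hx
  rw [mem_closedBall]
  refine distE_le (by norm_num) _ _ ?_
  have h0 : (0:E2) 0 = 0 := rfl
  have h1 : (0:E2) 1 = 0 := rfl
  rw [h0, h1]
  obtain ⟨⟨a1, a2⟩, ⟨b1, b2⟩, -⟩ := hx
  nlinarith

lemma SL_biconvex : Biconvex (bvec1 0) (bvec2 0) SL := by
  intro p
  constructor
  · -- horizontal lines
    rintro x ⟨hxl, hxS⟩ y ⟨hyl, hyS⟩ a b ha hb hab
    have hx1 : x 1 = p 1 := by obtain ⟨s, rfl⟩ := hxl; simp
    have hy1 : y 1 = p 1 := by obtain ⟨s, rfl⟩ := hyl; simp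
    refine ⟨lineThru_convex p _ hxl hyl ha hb hab, ?_⟩
    obtain ⟨⟨hx0a, hx0b⟩, ⟨hx1a, hx1b⟩, hxd⟩ := hxS
    obtain ⟨⟨hy0a, hy0b⟩, ⟨hy1a, hy1b⟩, hyd⟩ := hyS
    refine ⟨⟨?_, ?_⟩, ⟨?_, ?_⟩, ?_⟩
    · rw [combo_apply]; exact combo_ge ha hb hab hx0a hy0a
    · rw [combo_apply]; exact combo_le ha hb hab hx0b hy0b
    · rw [combo_apply]; exact combo_ge ha hb hab hx1a hy1a
    · rw [combo_apply]; exact combo_le ha hb hab hx1b hy1b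
    · by_cases hp : p 1 ≤ 1
      · right; rw [combo_apply, hx1, hy1]; nlinarith
      · left
        rw [combo_apply]
        have hx' : x 0 ≤ 1 := by rcases hxd with h | h; exacts [h, absurd (hx1 ▸ h) hp]
        have hy' : y 0 ≤ 1 := by rcases hyd with h | h; exacts [h, absurd (hy1 ▸ h) hp]
        exact combo_le ha hb hab hx' hy'
  · -- vertical lines
    rintro x ⟨hxl, hxS⟩ y ⟨hyl, hyS⟩ a b ha hb hab
    have hx1 : x 0 = p 0 := by obtain ⟨s, rfl⟩ := hxl; simp
    have hy1 : y 0 = p 0 := by obtain ⟨s, rfl⟩ := hyl; simp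
    refine ⟨lineThru_convex p _ hxl hyl ha hb hab, ?_⟩
    obtain ⟨⟨hx0a, hx0b⟩, ⟨hx1a, hx1b⟩, hxd⟩ := hxS
    obtain ⟨⟨hy0a, hy0b⟩, ⟨hy1a, hy1b⟩, hyd⟩ := hyS
    refine ⟨⟨?_, ?_⟩, ⟨?_, ?_⟩, ?_⟩
    · rw [combo_apply]; exact combo_ge ha hb hab hx0a hy0a
    · rw [combo_apply]; exact combo_le ha hb hab hx0b hy0b
    · rw [combo_apply]; exact combo_ge ha hb hab hx1a hy1a
    · rw [combo_apply]; exact combo_le ha hb hab hx1b hy1b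
    · by_cases hp : p 0 ≤ 1
      · left; rw [combo_apply, hx1, hy1]; nlinarith
      · right
        rw [combo_apply]
        have hx' : x 1 ≤ 1 := by rcases hxd with h | h; exacts [absurd (hx1 ▸ h) hp, h]
        have hy' : y 1 ≤ 1 := by rcases hyd with h | h; exacts [absurd (hy1 ▸ h) hp, h]
        exact combo_le ha hb hab hx' hy'

/-- The interior of the L-shaped region. -/
def UL : Set E2 :=
  {x | (0 < x 0 ∧ x 0 < 2) ∧ (0 < x 1 ∧ x 1 < 2) ∧ (x 0 < 1 ∨ x 1 < 1)}

lemma UL_open : IsOpen UL := by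
  have h0 : Continuous fun x : E2 => x 0 := by fun_prop
  have h1 : Continuous fun x : E2 => x 1 := by fun_prop
  have : UL = ((fun x : E2 => x 0) ⁻¹' Ioo 0 2) ∩ ((fun x : E2 => x 1) ⁻¹' Ioo 0 2) ∩
      (((fun x : E2 => x 0) ⁻¹' Iio 1) ∪ ((fun x : E2 => x 1) ⁻¹' Iio 1)) := by
    ext x; simp [UL, mem_Ioo, mem_Iio]; tauto
  rw [this]
  exact (((isOpen_Ioo.preimage h0).inter (isOpen_Ioo.preimage h1)).inter
    ((isOpen_Iio.preimage h0).union (isOpen_Iio.preimage h1)))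

lemma UL_sub : UL ⊆ SL := by
  rintro x ⟨⟨h1, h2⟩, ⟨h3, h4⟩, h5⟩
  exact ⟨⟨h1.le, h2.le⟩, ⟨h3.le, h4.le⟩, h5.imp le_of_lt le_of_lt⟩

lemma interior_SL : interior SL = UL := by
  apply Subset.antisymm
  · intro x hx
    rw [mem_interior_iff_mem_nhds, Metric.mem_nhds_iff] at hx
    obtain ⟨ε, hε, hball⟩ := hx
    have mem1 : ∀ u v : ℝ, (u - x 0)^2 + (v - x 1)^2 < ε^2 → pt u v ∈ SL := by
      intro u v h
      apply hball
      rw [mem_ball, distE_lt hε]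
      simpa using h
    have key1 := mem1 (x 0 + ε/2) (x 1) (by nlinarith)
    have key2 := mem1 (x 0 - ε/2) (x 1) (by nlinarith)
    have key3 := mem1 (x 0) (x 1 + ε/2) (by nlinarith)
    have key4 := mem1 (x 0) (x 1 - ε/2) (by nlinarith)
    simp only [SL, mem_setOf_eq, pt_apply0, pt_apply1] at key1 key2 key3 key4
    refine ⟨⟨by linarith [key2.1.1], by linarith [key1.1.2]⟩,
      ⟨by linarith [key4.2.1.1], by linarith [key3.2.1.2]⟩, ?_⟩
    by_contra hcon
    push_neg at hcon
    obtain ⟨hc1, hc2⟩ := hcon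
    have key5 := mem1 (x 0 + ε/2) (x 1 + ε/2) (by nlinarith)
    simp only [SL, mem_setOf_eq, pt_apply0, pt_apply1] at key5
    rcases key5.2.2 with h | h <;> linarith
  · exact interior_maximal UL_sub UL_open

lemma SL_regular : SL = closure (interior SL) := by
  apply Subset.antisymm
  · intro x hx
    rw [Metric.mem_closure_iff]
    intro ε hε
    set t : ℝ := min 1 (ε/4) with ht
    have ht0 : 0 < t := lt_min one_pos (by linarith)
    have ht1 : t ≤ 1 := min_le_left _ _
    have ht4 : t ≤ ε/4 := min_le_right _ _
    obtain ⟨⟨h1, h2⟩, ⟨h3, h4⟩, h5⟩ := hx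
    refine ⟨pt ((1-t)*x 0 + t/2) ((1-t)*x 1 + t/2), ?_, ?_⟩
    · rw [interior_SL]
      simp only [UL, mem_setOf_eq, pt_apply0, pt_apply1]
      refine ⟨⟨by nlinarith, by nlinarith⟩, ⟨by nlinarith, by nlinarith⟩, ?_⟩
      rcases h5 with h | h
      · left; nlinarith
      · right; nlinarith
    · rw [distE_lt hε]
      simp only [pt_apply0, pt_apply1]
      have e1 : x 0 - ((1-t)*x 0 + t/2) = t*(x 0 - 1/2) := by ring
      have e2 : x 1 - ((1-t)*x 1 + t/2) = t*(x 1 - 1/2) := by ring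
      rw [e1, e2]
      have hq1 : (x 0 - 1/2)^2 ≤ 9/4 := by nlinarith
      have hq2 : (x 1 - 1/2)^2 ≤ 9/4 := by nlinarith
      have htt : t^2 ≤ (ε/4)^2 := by nlinarith
      calc (t*(x 0 - 1/2))^2 + (t*(x 1 - 1/2))^2
          = t^2*(x 0 - 1/2)^2 + t^2*(x 1 - 1/2)^2 := by ring
        _ ≤ t^2*(9/4) + t^2*(9/4) :=
            add_le_add (mul_le_mul_of_nonneg_left hq1 (sq_nonneg t))
              (mul_le_mul_of_nonneg_left hq2 (sq_nonneg t))
        _ < ε^2 := by nlinarith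
  · exact closure_minimal interior_subset SL_closed

/-- Degenerate axis-parallel boxes (segments). -/
def Box (a b c d : ℝ) : Set E2 :=
  {x | (a ≤ x 0 ∧ x 0 ≤ b) ∧ (c ≤ x 1 ∧ x 1 ≤ d)}

lemma Box_convex (a b c d : ℝ) : Convex ℝ (Box a b c d) := by
  rintro x ⟨⟨hx1, hx2⟩, hx3, hx4⟩ y ⟨⟨hy1, hy2⟩, hy3, hy4⟩ s r hs hr hsr
  refine ⟨⟨?_, ?_⟩, ?_, ?_⟩ <;> rw [combo_apply]
  · exact combo_ge hs hr hsr hx1 hy1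
  · exact combo_le hs hr hsr hx2 hy2
  · exact combo_ge hs hr hsr hx3 hy3
  · exact combo_le hs hr hsr hx4 hy4

lemma pt_mem_Box {a b c d u v : ℝ} (h1 : a ≤ u) (h2 : u ≤ b) (h3 : c ≤ v) (h4 : v ≤ d) :
    pt u v ∈ Box a b c d := by
  exact ⟨⟨by simpa using h1, by simpa using h2⟩, by simpa using h3, by simpa using h4⟩

lemma Box_pc {a b c d : ℝ} (hab : a ≤ b) (hcd : c ≤ d) : IsPathConnected (Box a b c d) :=
  (Box_convex a b c d).isPathConnected ⟨pt a c, pt_mem_Box le_rfl hab le_rfl hcd⟩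

lemma frontier_SL : frontier SL =
    ((((Box 0 2 0 0 ∪ Box 2 2 0 1) ∪ Box 1 2 1 1) ∪ Box 1 1 1 2) ∪ Box 0 1 2 2) ∪
      Box 0 0 0 2 := by
  have hfr : frontier SL = SL \ interior SL := by
    rw [frontier, SL_closed.closure_eq]
  rw [hfr, interior_SL]
  ext x
  simp only [mem_diff, SL, UL, Box, mem_setOf_eq, mem_union]
  constructor
  · rintro ⟨⟨⟨h1, h2⟩, ⟨h3, h4⟩, h5⟩, hU⟩
    by_cases c0 : x 1 = 0
    · exact Or.inl (Or.inl (Or.inl (Or.inl (Or.inl ⟨⟨h1, h2⟩, by rw [c0], by rw [c0]⟩))))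
    by_cases c1 : x 0 = 0
    · exact Or.inr ⟨⟨le_of_eq c1.symm, le_of_eq c1⟩, h3, h4⟩
    by_cases c2 : x 0 = 2
    · have hx1 : x 1 ≤ 1 := by
        rcases h5 with h | h
        · exfalso; rw [c2] at h; linarith
        · exact h
      exact Or.inl (Or.inl (Or.inl (Or.inl (Or.inr ⟨⟨le_of_eq c2.symm, le_of_eq c2⟩, h3, hx1⟩))))
    by_cases c3 : x 1 = 2
    · have hx0 : x 0 ≤ 1 := by
        rcases h5 with h | h
        · exact h
        · exfalso; rw [c3] at h; linarith
      exact Or.inl (Or.inr ⟨⟨h1, hx0⟩, le_of_eq c3.symm, le_of_eq c3⟩)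
    · -- interior rectangle coordinates; must be on the notch
      have s1 : 0 < x 0 := lt_of_le_of_ne h1 (Ne.symm c1)
      have s2 : x 0 < 2 := lt_of_le_of_ne h2 c2
      have s3 : 0 < x 1 := lt_of_le_of_ne h3 (Ne.symm c0)
      have s4 : x 1 < 2 := lt_of_le_of_ne h4 c3
      have hno : ¬(x 0 < 1 ∨ x 1 < 1) := by
        intro h; exact hU ⟨⟨s1, s2⟩, ⟨s3, s4⟩, h⟩
      push_neg at hno
      obtain ⟨n1, n2⟩ := hno
      rcases h5 with h | h
      · have e : x 0 = 1 := le_antisymm h n1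
        exact Or.inl (Or.inl (Or.inr ⟨⟨le_of_eq e.symm, le_of_eq e⟩, n2, h4⟩))
      · have e : x 1 = 1 := le_antisymm h n2
        exact Or.inl (Or.inl (Or.inl (Or.inr ⟨⟨n1, h2⟩, le_of_eq e.symm, le_of_eq e⟩)))
  · rintro (((((⟨⟨h1, h2⟩, h3, h4⟩ | ⟨⟨h1, h2⟩, h3, h4⟩) | ⟨⟨h1, h2⟩, h3, h4⟩) |
      ⟨⟨h1, h2⟩, h3, h4⟩) | ⟨⟨h1, h2⟩, h3, h4⟩) | ⟨⟨h1, h2⟩, h3, h4⟩) <;>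
    · constructor
      · refine ⟨⟨by linarith, by linarith⟩, ⟨by linarith, by linarith⟩, ?_⟩
        first
          | (left; linarith)
          | (right; linarith)
      · rintro ⟨⟨g1, g2⟩, ⟨g3, g4⟩, g5 | g5⟩ <;> linarith

lemma frontier_SL_pc : IsPathConnected (frontier SL) := by
  rw [frontier_SL]
  have b1 : IsPathConnected (Box 0 2 0 0) := Box_pc (by norm_num) le_rfl
  have b2 : IsPathConnected (Box 2 2 0 1) := Box_pc le_rfl (by norm_num)
  have b3 : IsPathConnected (Box 1 2 1 1) := Box_pc (by norm_num) le_rfl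
  have b4 : IsPathConnected (Box 1 1 1 2) := Box_pc le_rfl (by norm_num)
  have b5 : IsPathConnected (Box 0 1 2 2) := Box_pc (by norm_num) le_rfl
  have b6 : IsPathConnected (Box 0 0 0 2) := Box_pc le_rfl (by norm_num)
  have u1 := b1.union b2 ⟨pt 2 0, ⟨pt_mem_Box (by norm_num) (by norm_num) le_rfl le_rfl,
    pt_mem_Box le_rfl le_rfl (by norm_num) (by norm_num)⟩⟩
  have u2 := u1.union b3 ⟨pt 2 1, Or.inr (pt_mem_Box le_rfl le_rfl (by norm_num) (by norm_num)),
    pt_mem_Box (by norm_num) le_rfl le_rfl le_rfl⟩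
  have u3 := u2.union b4 ⟨pt 1 1, Or.inr (pt_mem_Box le_rfl (by norm_num) le_rfl le_rfl),
    pt_mem_Box le_rfl le_rfl le_rfl (by norm_num)⟩
  have u4 := u3.union b5 ⟨pt 1 2, Or.inr (pt_mem_Box le_rfl le_rfl (by norm_num) le_rfl),
    pt_mem_Box (by norm_num) le_rfl le_rfl le_rfl⟩
  have u5 := u4.union b6 ⟨pt 0 0, Or.inl (Or.inl (Or.inl (Or.inl
    (pt_mem_Box le_rfl (by norm_num) le_rfl le_rfl)))),
    pt_mem_Box le_rfl le_rfl le_rfl (by norm_num)⟩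
  exact u5

lemma SL_not_alpha (α : ℝ) (hα : 0 < α) : SL ≠ AlphaHull α SL := by
  set ε : ℝ := min (1/8) (α/4) with hεdef
  have hε0 : 0 < ε := lt_min (by norm_num) (by linarith)
  have hε8 : ε ≤ 1/8 := min_le_left _ _
  have hε4 : ε ≤ α/4 := min_le_right _ _
  intro hEq
  have hp : pt (1+ε) (1+ε) ∈ AlphaHull α SL := by
    refine mem_sInter.2 ?_
    rintro T ⟨c, hdisj, rfl⟩
    simp only [mem_compl_iff, mem_ball, not_lt]
    rw [le_distE hα.le]
    simp only [pt_apply0, pt_apply1]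
    -- every point of SL is at distance ≥ α from c
    have hS : ∀ s ∈ SL, α^2 ≤ (s 0 - c 0)^2 + (s 1 - c 1)^2 := by
      intro s hs
      rw [← le_distE hα.le]
      by_contra h
      push_neg at h
      have : s ∈ Metric.ball c α ∩ SL := ⟨by rwa [mem_ball], hs⟩
      rw [hdisj] at this
      exact this
    have V : ∀ t : ℝ, 0 ≤ t → t ≤ 2 → α^2 ≤ (1 - c 0)^2 + (t - c 1)^2 := by
      intro t h1 h2
      have := hS (pt 1 t) ⟨⟨by norm_num, by norm_num⟩, ⟨by simpa using h1, by simpa using h2⟩,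
        Or.inl (by norm_num)⟩
      simpa using this
    have H : ∀ t : ℝ, 0 ≤ t → t ≤ 2 → α^2 ≤ (t - c 0)^2 + (1 - c 1)^2 := by
      intro t h1 h2
      have := hS (pt t 1) ⟨⟨by simpa using h1, by simpa using h2⟩, ⟨by norm_num, by norm_num⟩,
        Or.inr (by norm_num)⟩
      simpa using this
    set u := c 0
    set v := c 1
    rcases le_or_gt u 1 with hu | hu
    · rcases le_or_gt v 0 with hv | hv
      · have := V 0 le_rfl (by norm_num); nlinarith
      rcases le_or_gt v 2 with hv2 | hv2
      · have := V v hv.le hv2; nlinarith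
      · have := V 2 (by norm_num) le_rfl; nlinarith
    rcases le_or_gt v 1 with hv | hv
    · rcases le_or_gt u 0 with hu0 | hu0
      · have := H 0 le_rfl (by norm_num); nlinarith
      rcases le_or_gt u 2 with hu2 | hu2
      · have := H u hu0.le hu2; nlinarith
      · have := H 2 (by norm_num) le_rfl; nlinarith
    -- now u > 1 and v > 1
    rcases le_or_gt u 2 with hu2 | hu2
    · rcases le_or_gt v 2 with hv2 | hv2
      · -- both in (1,2]
        have h1 := V v (by linarith) hv2
        have h2 := H u (by linarith) hu2
        have hu1 : α ≤ u - 1 := by nlinarith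
        have hv1 : α ≤ v - 1 := by nlinarith
        have a1 : 3*α/4 ≤ u - 1 - ε := by linarith
        have a2 : 3*α/4 ≤ v - 1 - ε := by linarith
        nlinarith [mul_self_le_mul_self (by positivity : (0:ℝ) ≤ 3*α/4) a1,
          mul_self_le_mul_self (by positivity : (0:ℝ) ≤ 3*α/4) a2]
      · -- u ∈ (1,2], v > 2
        have h1 := V 2 (by norm_num) le_rfl
        nlinarith
    · rcases le_or_gt v 2 with hv2 | hv2
      · -- u > 2, v ∈ (1,2]
        have h1 := H 2 (by norm_num) le_rfl
        nlinarith
      · -- u > 2 and v > 2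
        rcases le_total u v with huv | huv
        · have h1 := V 2 (by norm_num) le_rfl
          nlinarith
        · have h1 := H 2 (by norm_num) le_rfl
          nlinarith
  rw [← hEq] at hp
  rcases hp with ⟨-, -, h | h⟩ <;> · simp only [pt_apply0, pt_apply1] at h; linarith

/-- there is a compact, regular, biconvex (wrt the canonical
axes) set with path-connected boundary that is not `α`-convex for any
`α > 0`. -/
theorem exists_biconvex_not_alphaConvex :
    ∃ S : Set E2, IsCompact S ∧ Biconvex (bvec1 0) (bvec2 0) S ∧
      S = closure (interior S) ∧ IsPathConnected (frontier S) ∧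
      ∀ α : ℝ, 0 < α → S ≠ AlphaHull α S :=
  ⟨SL, SL_compact, SL_biconvex, SL_regular, frontier_SL_pc, SL_not_alpha⟩
end
end

section
/- Let S ⊆ ℝ² be compact and standard with respect to a Borel probability measure P supported on S (i.e., there exist δ, λ > 0 with P(B(x,ε) ∩ S) ≥ δ μ_L(B(x,ε)) for all x ∈ S and 0 < ε ≤ λ). If X₁, X₂, … are i.i.d. with distribution P, then d_H(S, {X₁,…,Xₙ}) → 0 almost surely as n → ∞. -/
noncomputable section

open Set Metric MeasureTheory Filter Real
open scoped RealInnerProductSpace Topology symmDiff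
open scoped ENNReal

lemma hit_ball {Ω : Type*} [MeasureSpace Ω]
    [IsProbabilityMeasure (volume : Measure Ω)]
    (P : Measure E2) [IsProbabilityMeasure P]
    (X : ℕ → Ω → E2) (hmeas : ∀ i, Measurable (X i))
    (hdist : ∀ i, Measure.map (X i) (volume : Measure Ω) = P)
    (hindep : ProbabilityTheory.iIndepFun X (volume : Measure Ω))
    (B : Set E2) (hB : MeasurableSet B) (hpos : 0 < P B) :
    ∀ᵐ ω : Ω, ∃ i, X i ω ∈ B := by
  have hpre : ∀ i, volume (X i ⁻¹' Bᶜ) = P Bᶜ := by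
    intro i
    rw [← hdist i, Measure.map_apply (hmeas i) hB.compl]
  have key : ∀ n : ℕ, volume (⋂ i ∈ Finset.range n, X i ⁻¹' Bᶜ) = (P Bᶜ) ^ n := by
    intro n
    have := hindep.measure_inter_preimage_eq_mul (Finset.range n)
      (sets := fun _ => Bᶜ) (fun i _ => hB.compl)
    rw [this, Finset.prod_congr rfl (fun i _ => hpre i), Finset.prod_const, Finset.card_range]
  have hlt : P Bᶜ < 1 := by
    rw [prob_compl_eq_one_sub hB]
    exact ENNReal.sub_lt_self ENNReal.one_ne_top one_ne_zero hpos.ne'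
  have hbound : ∀ n : ℕ, volume (⋂ i, X i ⁻¹' Bᶜ) ≤ (P Bᶜ) ^ n := by
    intro n
    rw [← key n]
    exact measure_mono (Set.iInter_mono fun i => by
      by_cases h : i ∈ Finset.range n <;> simp [h, Set.iInter_subset])
  have h0 : volume (⋂ i, X i ⁻¹' Bᶜ) = 0 := by
    have := ge_of_tendsto' (ENNReal.tendsto_pow_atTop_nhds_zero_of_lt_one hlt) hbound
    exact le_antisymm this zero_le
  rw [ae_iff]
  convert h0 using 2
  ext ω
  simp [not_exists]


/-- for an i.i.d. sample from a probability measure `P`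
supported on a compact standard set `S`, the Hausdorff distance between `S`
and the sample tends to `0` almost surely. -/
theorem hausdorffDist_sample_tendsto_zero {Ω : Type*} [MeasureSpace Ω]
    [IsProbabilityMeasure (volume : Measure Ω)]
    (P : Measure E2) [IsProbabilityMeasure P]
    (S : Set E2) (hScomp : IsCompact S) (hsupp : P Sᶜ = 0)
    (hstd : ∃ δ > (0 : ℝ), ∃ lam > (0 : ℝ), ∀ x ∈ S, ∀ ε : ℝ, 0 < ε → ε ≤ lam →
      ENNReal.ofReal δ * volume (closedBall x ε) ≤ P (closedBall x ε ∩ S))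
    (X : ℕ → Ω → E2) (hmeas : ∀ i, Measurable (X i))
    (hdist : ∀ i, Measure.map (X i) (volume : Measure Ω) = P)
    (hindep : ProbabilityTheory.iIndepFun X (volume : Measure Ω)) :
    ∀ᵐ ω : Ω, Tendsto
      (fun n : ℕ => hausdorffDist S {x : E2 | ∃ i < n, X i ω = x})
      atTop (𝓝 0) := by
  classical
  obtain ⟨δ, hδ, lam, hlam, hstd⟩ := hstd
  have hSmeas : MeasurableSet S := hScomp.isClosed.measurableSet
  -- a.s. all sample points lie in S
  have hall : ∀ᵐ ω : Ω, ∀ i, X i ω ∈ S := by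
    rw [ae_all_iff]
    intro i
    rw [ae_iff]
    have h1 : {ω | ¬ X i ω ∈ S} = X i ⁻¹' Sᶜ := rfl
    rw [h1, ← Measure.map_apply (hmeas i) hSmeas.compl, hdist i, hsupp]
  -- for each k, a.s. the sample is eventually (1/(k+1))-dense
  have hgood : ∀ k : ℕ, ∀ᵐ ω : Ω, ∀ᶠ n in atTop,
      hausdorffDist S {x : E2 | ∃ i < n, X i ω = x} ≤ 1 / ((k : ℝ) + 1) := by
    intro k
    set ε : ℝ := 1 / ((k : ℝ) + 1) with hεdef
    have hε : 0 < ε := by positivity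
    set r : ℝ := min (ε / 2) lam with hrdef
    have hr : 0 < r := lt_min (by positivity) hlam
    have hrlam : r ≤ lam := min_le_right _ _
    have h2r : 2 * r ≤ ε := by
      have := min_le_left (ε / 2) lam
      linarith
    obtain ⟨t, htS, htfin, htcov⟩ :=
      hScomp.elim_finite_subcover_image (fun c (_ : c ∈ S) => isOpen_ball)
        (fun s hs => Set.mem_biUnion hs (mem_ball_self hr))
    have hposball : ∀ c ∈ t, 0 < P (closedBall c r) := by
      intro c hc
      have hcS : c ∈ S := htS hc
      have h1 : ENNReal.ofReal δ * volume (closedBall c r) ≤ P (closedBall c r ∩ S) :=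
        hstd c hcS r hr hrlam
      have h2 : (0 : ℝ≥0∞) < ENNReal.ofReal δ * volume (closedBall c r) := by
        apply ENNReal.mul_pos (by simp [hδ]) 
        exact ((measure_ball_pos volume c hr).trans_le
          (measure_mono ball_subset_closedBall)).ne'
      exact h2.trans_le (h1.trans (measure_mono Set.inter_subset_left))
    have hhitall : ∀ᵐ ω : Ω, ∀ c ∈ t, ∃ i, X i ω ∈ closedBall c r :=
      (ae_ball_iff htfin.countable).2 fun c hc =>
        hit_ball P X hmeas hdist hindep (closedBall c r) measurableSet_closedBall
          (hposball c hc)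
    filter_upwards [hhitall, hall] with ω hhit hin
    -- index bound
    set g : E2 → ℕ := fun c =>
      if h : ∃ i, X i ω ∈ closedBall c r then Nat.find h else 0 with hgdef
    set N : ℕ := htfin.toFinset.sup g + 1 with hNdef
    rw [eventually_atTop]
    refine ⟨N, fun n hn => ?_⟩
    apply hausdorffDist_le_of_infDist hε.le
    · intro s hs
      obtain ⟨c, hc, hsc⟩ := Set.mem_iUnion₂.1 (htcov hs)
      have hex : ∃ i, X i ω ∈ closedBall c r := hhit c hc
      have hgc : X (g c) ω ∈ closedBall c r := by
        rw [hgdef]; simp only [hex, dif_pos]; exact Nat.find_spec hex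
      have hglt : g c < n := by
        have : g c ≤ htfin.toFinset.sup g :=
          Finset.le_sup (htfin.mem_toFinset.2 hc)
        omega
      have hmem : X (g c) ω ∈ {x : E2 | ∃ i < n, X i ω = x} := ⟨g c, hglt, rfl⟩
      calc infDist s {x : E2 | ∃ i < n, X i ω = x} ≤ dist s (X (g c) ω) :=
            infDist_le_dist_of_mem hmem
        _ ≤ dist s c + dist (X (g c) ω) c := by
            rw [dist_comm (X (g c) ω) c]; exact dist_triangle _ _ _
        _ ≤ r + r := add_le_add (le_of_lt (mem_ball.1 hsc)) (mem_closedBall.1 hgc)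
        _ ≤ ε := by linarith
    · rintro x ⟨i, -, rfl⟩
      rw [infDist_zero_of_mem (hin i)]
      exact hε.le
  filter_upwards [ae_all_iff.2 hgood] with ω hω
  rw [Metric.tendsto_atTop]
  intro ε hε
  obtain ⟨k, hk⟩ := exists_nat_one_div_lt hε
  obtain ⟨N, hN⟩ := eventually_atTop.1 (hω k)
  refine ⟨N, fun n hn => ?_⟩
  rw [Real.dist_eq, sub_zero, abs_of_nonneg hausdorffDist_nonneg]
  exact lt_of_le_of_lt (hN n hn) hk
end
end
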